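/- Let F: Λ → ℝ^d be continuous, f = F∘Π, let I be the set of parabolic fixed points of T and A the convex hull of {F(x) : x ∈ I}. Let {n_j} be a subsequence of ℕ and ω ∈ Σ. If lim_{j→∞} A_{n_j} g(ω) = 0 and lim_{j→∞} A_{n_j} f(ω) exists, then this limit lies in A. In particular, if liminf_{n→∞} A_n g(ω) = 0 and lim_{n→∞} A_n f(ω) exists, then lim_{n→∞} A_n f(ω) ∈ A. -/

import Mathlib

open MeasureTheory Set Filter Topology

noncomputable section

/-- A finite measurable partition of the space. -/
def IsMeasPartition {X : Type*} [MeasurableSpace X] (P : Finset (Set X)) : Prop :=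
  (∀ s ∈ P, MeasurableSet s) ∧ ((P : Set (Set X)).PairwiseDisjoint id) ∧ (⋃ s ∈ P, s) = univ

/-- Shannon entropy of the refinement `⋁_{i<n} T^{-i} P` of a finite partition `P`
under the first `n` iterates of `T`, with respect to the measure `μ`. -/
def partEntropy {X : Type*} [MeasurableSpace X] (T : X → X) (μ : Measure X)
    (P : Finset (Set X)) (n : ℕ) : ℝ :=
  ∑ c : Fin n → {s // s ∈ P},
    Real.negMulLog (μ (⋂ i : Fin n, T^[(i : ℕ)] ⁻¹' ((c i : Set X)))).toReal

/-- The Kolmogorov–Sinai (metric) entropy of the measure `μ` for the map `T`: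
the supremum over finite measurable partitions `P` of
`lim_n (1/n) H(⋁_{i<n} T^{-i}P)`, the limit being computed as an infimum (by
subadditivity of the entropy sequence). -/
def metricEntropy {X : Type*} [MeasurableSpace X] (T : X → X) (μ : Measure X) : ℝ :=
  ⨆ P : {P : Finset (Set X) // IsMeasPartition P},
    ⨅ n : ℕ, partEntropy T μ (P : Finset (Set X)) (n + 1) / (n + 1)

/-- Birkhoff (ergodic) average `A_n f(x) = (1/n) ∑_{j<n} f(T^j x)`. -/
def birkhoff {X E : Type*} [AddCommMonoid E] [Module ℝ E]
    (T : X → X) (f : X → E) (n : ℕ) (x : X) : E :=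
  (n : ℝ)⁻¹ • ∑ j ∈ Finset.range n, f (T^[j] x)

/-- The full shift space `Σ = {1,…,m}^ℕ`. -/
abbrev SymbSp (m : ℕ) := ℕ → Fin m

/-- The shift map `σ` on `Σ`. -/
def shift {m : ℕ} (ω : SymbSp m) : SymbSp m := fun n => ω (n + 1)

/-- The set `M(Σ,σ)` of shift-invariant Borel probability measures on `Σ`. -/
def shiftInvMeasures (m : ℕ) : Set (Measure (SymbSp m)) :=
  {μ | IsProbabilityMeasure μ ∧ μ.map shift = μ}

/-- The level set `X_α = {ω ∈ Σ : lim_n A_n f(ω) = α}` of a potential `f` on `Σ`. -/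
def symbLevelSet {m : ℕ} {E : Type*} [AddCommMonoid E] [Module ℝ E] [TopologicalSpace E]
    (f : SymbSp m → E) (α : E) : Set (SymbSp m) :=
  {ω | Tendsto (fun n => birkhoff shift f n ω) atTop (𝓝 α)}

/-- A piecewise `C¹` expanding (possibly non-uniformly hyperbolic) interval map:
`m` pairwise non-overlapping subintervals `I 1, …, I m` of `[0,1]`, a map `T` which
restricted to each `I i` is a `C¹` surjection onto `[0,1]` (with derivative `T'`),
a unique fixed point `fixPt i` of `T` in each `I i`, and `T' > 1` away from the
fixed points. -/
structure PCSystem (m : ℕ) where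
  hm : 0 < m
  I : Fin m → Set ℝ
  T : ℝ → ℝ
  T' : ℝ → ℝ
  fixPt : Fin m → ℝ
  hI : ∀ i, ∃ a b : ℝ, a < b ∧ I i = Icc a b
  hIsub : ∀ i, I i ⊆ Icc 0 1
  hdisj : ∀ i j, i ≠ j → Disjoint (interior (I i)) (interior (I j))
  hTmeas : Measurable T
  hT'meas : Measurable T'
  hmapsto : ∀ i, MapsTo T (I i) (Icc 0 1)
  hsurj : ∀ i, SurjOn T (I i) (Icc 0 1)
  hderiv : ∀ i, ∀ x ∈ I i, HasDerivWithinAt T (T' x) (I i) x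
  hT'cont : ∀ i, ContinuousOn T' (I i)
  hfixmem : ∀ i, fixPt i ∈ I i
  hfix : ∀ i, T (fixPt i) = fixPt i
  hfixuniq : ∀ i, ∀ y ∈ I i, T y = y → y = fixPt i
  hexp : ∀ y ∈ ⋃ i, I i, y ∉ range fixPt → 1 < T' y

namespace PCSystem

variable {m : ℕ} (S : PCSystem m)

/-- The attractor `Λ = {x ∈ ⋃ I_i : T^n x ∈ [0,1] for all n}`. -/
def attractor : Set ℝ :=
  {x | (x ∈ ⋃ i, S.I i) ∧ ∀ n : ℕ, S.T^[n] x ∈ Icc (0:ℝ) 1}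

/-- The basic interval `I_w = T_{w₁}∘⋯∘T_{wₙ}([0,1])` coded by the word `w`,
described via the forward map: `I_{i·w} = I_i ∩ T⁻¹(I_w)`. -/
def cyl (S : PCSystem m) : List (Fin m) → Set ℝ
  | [] => Icc 0 1
  | i :: w => S.I i ∩ S.T ⁻¹' (cyl S w)

end PCSystem

/-- The word `ω₁…ωₙ` of the first `n` symbols of `ω`. -/
def word {m : ℕ} (ω : SymbSp m) (n : ℕ) : List (Fin m) := List.ofFn fun j : Fin n => ω j

namespace PCSystem

variable {m : ℕ} (S : PCSystem m)

/-- The coding map `Π : Σ → Λ`, `Π(ω) = lim_n T_{ω₁}∘⋯∘T_{ωₙ}([0,1])`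
(realized as the supremum of the nested intersection `⋂_n I_{ω|_n}`, which is
a single point). -/
def code (ω : SymbSp m) : ℝ := sSup (⋂ n : ℕ, S.cyl (word ω n))

/-- The geometric potential `g(ω) = −log T'_{ω₁}(Π(σω)) = log T'(Π(ω))`. -/
def g (ω : SymbSp m) : ℝ := Real.log (S.T' (S.code ω))

/-- `Σ̃ = {ω : liminf_n A_n g(ω) > 0}`. -/
def SigmaTilde : Set (SymbSp m) :=
  {ω | 0 < atTop.liminf fun n => birkhoff shift S.g n ω}

/-- The set `M(Λ,T)` of `T`-invariant Borel probability measures on the attractor `Λ`. -/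
def invMeasures : Set (Measure ℝ) :=
  {μ | IsProbabilityMeasure μ ∧ μ.map S.T = μ ∧ μ S.attractorᶜ = 0}

/-- Lyapunov exponent `λ(μ,T) = ∫ log|T'| dμ` of a measure on the attractor. -/
def lyap (μ : Measure ℝ) : ℝ := ∫ x, Real.log |S.T' x| ∂μ

/-- Lyapunov exponent `λ(μ,σ) = ∫ g dμ` of a measure on the shift space. -/
def lyapSymb (μ : Measure (SymbSp m)) : ℝ := ∫ ω, S.g ω ∂μ

/-- The set of parabolic fixed points, i.e. those fixed points `x_j` with `T'(x_j) = 1`. -/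
def parabolicSet : Set ℝ := {y | ∃ i, y = S.fixPt i ∧ S.T' y = 1}

/-- The level set `Λ_α = {x ∈ Λ : lim_n (1/n)∑_{j<n} F(T^j x) = α}`. -/
def levelSet {E : Type*} [AddCommMonoid E] [Module ℝ E] [TopologicalSpace E]
    (F : ℝ → E) (α : E) : Set ℝ :=
  {x | x ∈ S.attractor ∧ Tendsto (fun n => birkhoff S.T F n x) atTop (𝓝 α)}

/-- `Λ̃`: the set of points of the attractor having exactly two codings. -/
def doubleCoded : Set ℝ := {x | x ∈ S.attractor ∧ (S.code ⁻¹' {x}).ncard = 2}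

end PCSystem

/-! ### Auxiliary lemmas for Statement 10 -/

section AuxStatement10

open scoped Classical

/-- Any point of a nondegenerate closed interval is in the closure of the interval minus
a finite set. -/
lemma aux_mem_closure_Icc_diff_finite {a b x : ℝ} (hab : a < b) (hx : x ∈ Icc a b)
    {G : Set ℝ} (hG : G.Finite) : x ∈ closure (Icc a b \ G) := by
  obtain ⟨e, he, hxe⟩ : ∃ e, e ∈ Icc a b ∧ x ≠ e := by
    rcases lt_or_eq_of_le hx.2 with h | h
    · exact ⟨b, ⟨hab.le, le_rfl⟩, h.ne⟩
    · exact ⟨a, ⟨le_rfl, hab.le⟩, by rw [h]; exact hab.ne'⟩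
  set u : ℕ → ℝ := fun k => x + (e - x) * (1 / (k + 1)) with hu
  have hconv : Tendsto u atTop (𝓝 x) := by
    have h1 : Tendsto (fun k : ℕ => (e - x) * (1 / (k + 1))) atTop (𝓝 ((e - x) * 0)) :=
      tendsto_const_nhds.mul tendsto_one_div_add_atTop_nhds_zero_nat
    have h2 : Tendsto (fun k : ℕ => x + (e - x) * (1 / (k + 1))) atTop
        (𝓝 (x + (e - x) * 0)) := tendsto_const_nhds.add h1
    simpa only [mul_zero, add_zero] using h2
  have hinj : Function.Injective u := by
    intro k l hkl
    have hex : e - x ≠ 0 := sub_ne_zero.2 (Ne.symm hxe)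
    have h1 : ((k : ℝ) + 1) ≠ 0 := by positivity
    have h2 : ((l : ℝ) + 1) ≠ 0 := by positivity
    have h3 : (e - x) * (1 / ((k : ℝ) + 1)) = (e - x) * (1 / ((l : ℝ) + 1)) := by
      have h := hkl
      simp only [hu] at h
      linarith
    have h4 := mul_left_cancel₀ hex h3
    rw [div_eq_div_iff h1 h2] at h4
    have h6 : (k : ℝ) = (l : ℝ) := by linarith
    exact_mod_cast h6
  have hmem : ∀ k : ℕ, u k ∈ Icc a b := by
    intro k
    have ht0 : (0 : ℝ) < 1 / ((k : ℝ) + 1) := by positivity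
    have ht1 : 1 / ((k : ℝ) + 1) ≤ 1 := by
      rw [div_le_one (by positivity)]
      have : (0 : ℝ) ≤ (k : ℝ) := Nat.cast_nonneg k
      linarith
    have hcvx := (convex_Icc a b) hx he (by linarith : (0:ℝ) ≤ 1 - 1 / ((k : ℝ) + 1))
      ht0.le (by ring)
    have heq : (1 - 1 / ((k : ℝ) + 1)) • x + (1 / ((k : ℝ) + 1)) • e = u k := by
      simp only [hu, smul_eq_mul]
      ring
    rwa [heq] at hcvx
  have hGfin : {k : ℕ | u k ∈ G}.Finite := hG.preimage hinj.injOn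
  have hev : ∀ᶠ k in atTop, u k ∈ Icc a b \ G := by
    rw [← Nat.cofinite_eq_atTop]
    filter_upwards [hGfin.eventually_cofinite_notMem] with k hk
    exact ⟨hmem k, hk⟩
  exact mem_closure_of_tendsto hconv hev

namespace PCSystem

variable {m : ℕ} (S : PCSystem m)

/-- The union of the basic intervals. -/
def K : Set ℝ := ⋃ i, S.I i

lemma isClosed_I (i : Fin m) : IsClosed (S.I i) := by
  obtain ⟨a, b, -, h⟩ := S.hI i; rw [h]; exact isClosed_Icc

lemma isCompact_I (i : Fin m) : IsCompact (S.I i) := by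
  obtain ⟨a, b, -, h⟩ := S.hI i; rw [h]; exact isCompact_Icc

lemma isClosed_K : IsClosed S.K := isClosed_iUnion_of_finite S.isClosed_I

lemma isCompact_K : IsCompact S.K := isCompact_iUnion S.isCompact_I

lemma K_subset : S.K ⊆ Icc 0 1 := iUnion_subset S.hIsub

lemma contT_I (i : Fin m) : ContinuousOn S.T (S.I i) :=
  fun x hx => (S.hderiv i x hx).continuousWithinAt

lemma contT'_K : ContinuousOn S.T' S.K :=
  (locallyFinite_of_finite _).continuousOn_iUnion S.isClosed_I S.hT'cont

lemma isClosed_K_inter_preimage {C : Set ℝ} (hC : IsClosed C) :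
    IsClosed (S.K ∩ S.T ⁻¹' C) := by
  have h : S.K ∩ S.T ⁻¹' C = ⋃ i, (S.I i ∩ S.T ⁻¹' C) := by
    rw [K, iUnion_inter]
  rw [h]
  exact isClosed_iUnion_of_finite fun i =>
    (S.contT_I i).preimage_isClosed_of_isClosed (S.isClosed_I i) hC

lemma cyl_subset_Icc : ∀ w, S.cyl w ⊆ Icc 0 1
  | [] => subset_rfl
  | i :: _ => inter_subset_left.trans (S.hIsub i)

lemma cyl_closed : ∀ w, IsClosed (S.cyl w)
  | [] => isClosed_Icc
  | i :: w =>
    (S.contT_I i).preimage_isClosed_of_isClosed (S.isClosed_I i) (cyl_closed w)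

lemma cyl_nonempty : ∀ w, (S.cyl w).Nonempty
  | [] => ⟨0, by simp [cyl]⟩
  | i :: w => by
    obtain ⟨y, hy⟩ := cyl_nonempty w
    obtain ⟨x, hx, hTx⟩ := S.hsurj i (S.cyl_subset_Icc w hy)
    exact ⟨x, hx, by simp only [mem_preimage, hTx]; exact hy⟩

lemma cyl_concat_subset : ∀ w (j : Fin m), S.cyl (w ++ [j]) ⊆ S.cyl w
  | [], j => fun x hx => S.cyl_subset_Icc [j] hx
  | _ :: w, j => inter_subset_inter_right _ (preimage_mono (cyl_concat_subset w j))

end PCSystem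

lemma word_succ {m : ℕ} (ω : SymbSp m) (n : ℕ) :
    word ω (n + 1) = ω 0 :: word (shift ω) n := by
  simp [word, List.ofFn_succ, shift]

lemma word_concat {m : ℕ} (ω : SymbSp m) (n : ℕ) :
    word ω (n + 1) = word ω n ++ [ω n] := by
  induction n generalizing ω with
  | zero => simp [word, List.ofFn_succ]
  | succ n ih =>
    rw [word_succ, ih (shift ω), word_succ]
    simp [shift]

namespace PCSystem

variable {m : ℕ} (S : PCSystem m)

lemma cyl_word_antitone (ω : SymbSp m) : Antitone fun n => S.cyl (word ω n) := by
  apply antitone_nat_of_succ_le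
  intro n
  rw [word_concat]
  exact S.cyl_concat_subset _ _

lemma code_mem_iInter (ω : SymbSp m) : S.code ω ∈ ⋂ n, S.cyl (word ω n) := by
  have hcomp : IsCompact (S.cyl (word ω 0)) := by
    have : word ω 0 = ([] : List (Fin m)) := by simp [word]
    rw [this]; exact isCompact_Icc
  have hne : (⋂ n, S.cyl (word ω n)).Nonempty :=
    IsCompact.nonempty_iInter_of_sequence_nonempty_isCompact_isClosed _
      (fun n => S.cyl_word_antitone ω (Nat.le_succ n))
      (fun n => S.cyl_nonempty _) hcomp (fun n => S.cyl_closed _)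
  have hcl : IsClosed (⋂ n, S.cyl (word ω n)) := isClosed_iInter fun n => S.cyl_closed _
  have hbdd : BddAbove (⋂ n, S.cyl (word ω n)) :=
    BddAbove.mono ((iInter_subset _ 0).trans (S.cyl_subset_Icc _)) bddAbove_Icc
  exact hcl.csSup_mem hne hbdd

lemma mem_I_of_mem_cyl : ∀ (n : ℕ) (ω : SymbSp m) (x : ℝ), x ∈ S.cyl (word ω n) →
    ∀ k < n, S.T^[k] x ∈ S.I (ω k)
  | 0, _, _, _, k, hk => absurd hk (Nat.not_lt_zero k)
  | n + 1, ω, x, hx, k, hk => by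
    rw [word_succ] at hx
    obtain ⟨hx1, hx2⟩ := hx
    cases k with
    | zero => simpa using hx1
    | succ k =>
      have h := mem_I_of_mem_cyl n (shift ω) (S.T x) hx2 k (Nat.lt_of_succ_lt_succ hk)
      simpa [Function.iterate_succ_apply, shift] using h

lemma code_iterate_mem (ω : SymbSp m) (k : ℕ) : S.T^[k] (S.code ω) ∈ S.I (ω k) :=
  S.mem_I_of_mem_cyl (k + 1) ω _ (mem_iInter.1 (S.code_mem_iInter ω) (k + 1)) k
    (Nat.lt_succ_self k)

/-- The compact invariant core: points all of whose iterates stay in `⋃ Iᵢ`. -/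
def lamStar : Set ℝ := {x | ∀ k : ℕ, S.T^[k] x ∈ S.K}

lemma isClosed_lamStar : IsClosed S.lamStar := by
  have hB : ∀ n : ℕ, IsClosed {x | ∀ k ≤ n, S.T^[k] x ∈ S.K} := by
    intro n
    induction n with
    | zero =>
      have h : {x | ∀ k ≤ 0, S.T^[k] x ∈ S.K} = S.K := by
        ext x
        simp only [mem_setOf_eq, Nat.le_zero]
        constructor
        · intro h; simpa using h 0 rfl
        · intro h k hk; subst hk; simpa using h
      rw [h]; exact S.isClosed_K
    | succ n ih =>
      have h : {x | ∀ k ≤ n + 1, S.T^[k] x ∈ S.K} =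
          S.K ∩ S.T ⁻¹' {x | ∀ k ≤ n, S.T^[k] x ∈ S.K} := by
        ext x
        constructor
        · intro h
          refine ⟨by simpa using h 0 (Nat.zero_le _), fun k hk => ?_⟩
          have := h (k + 1) (Nat.succ_le_succ hk)
          simpa [Function.iterate_succ_apply] using this
        · rintro ⟨h0, h1⟩ k hk
          cases k with
          | zero => simpa using h0
          | succ k =>
            have := h1 k (Nat.le_of_succ_le_succ hk)
            simpa [Function.iterate_succ_apply] using this
      rw [h]; exact S.isClosed_K_inter_preimage ih
  have h : S.lamStar = ⋂ n : ℕ, {x | ∀ k ≤ n, S.T^[k] x ∈ S.K} := by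
    ext x
    simp only [lamStar, mem_iInter, mem_setOf_eq]
    exact ⟨fun h n k _ => h k, fun h k => h k k le_rfl⟩
  rw [h]; exact isClosed_iInter hB

lemma lamStar_subset_K : S.lamStar ⊆ S.K := fun x hx => by simpa using hx 0

lemma isCompact_lamStar : IsCompact S.lamStar :=
  S.isCompact_K.of_isClosed_subset S.isClosed_lamStar S.lamStar_subset_K

lemma code_mem_lamStar (ω : SymbSp m) : S.code ω ∈ S.lamStar :=
  fun k => mem_iUnion.2 ⟨ω k, S.code_iterate_mem ω k⟩

lemma fixPt_mem_lamStar (i : Fin m) : S.fixPt i ∈ S.lamStar := fun k => by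
  rw [Function.iterate_fixed (S.hfix i) k]
  exact mem_iUnion.2 ⟨i, S.hfixmem i⟩

lemma lamStar_subset_attractor : S.lamStar ⊆ S.attractor := fun x hx =>
  ⟨show x ∈ S.K by simpa using hx 0, fun n => S.K_subset (hx n)⟩

lemma parabolic_mem_lamStar {p : ℝ} (hp : p ∈ S.parabolicSet) : p ∈ S.lamStar := by
  obtain ⟨i, rfl, -⟩ := hp
  exact S.fixPt_mem_lamStar i

lemma one_le_T' {x : ℝ} (hx : x ∈ S.K) : 1 ≤ S.T' x := by
  obtain ⟨i, hi⟩ := mem_iUnion.1 hx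
  obtain ⟨a, b, hab, hIeq⟩ := S.hI i
  have hxc : x ∈ closure (S.I i \ range S.fixPt) := by
    rw [hIeq]
    exact aux_mem_closure_Icc_diff_finite hab (hIeq ▸ hi) (finite_range _)
  have hcw : ContinuousWithinAt S.T' (S.I i \ range S.fixPt) x :=
    (S.hT'cont i x hi).mono diff_subset
  have h1 : S.T' x ∈ closure (S.T' '' (S.I i \ range S.fixPt)) := hcw.mem_closure_image hxc
  have h2 : S.T' '' (S.I i \ range S.fixPt) ⊆ Ici 1 := by
    rintro _ ⟨y, hy, rfl⟩
    exact (S.hexp y (mem_iUnion.2 ⟨i, hy.1⟩) hy.2).le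
  exact isClosed_Ici.closure_subset (closure_mono h2 h1)

lemma mem_parabolic_of_T'_eq_one {x : ℝ} (hx : x ∈ S.K) (h1 : S.T' x = 1) :
    x ∈ S.parabolicSet := by
  by_cases hr : x ∈ range S.fixPt
  · obtain ⟨i, rfl⟩ := hr
    exact ⟨i, rfl, h1⟩
  · exact absurd h1 (S.hexp x hx hr).ne'

lemma exists_gap {ε : ℝ} (hε : 0 < ε) :
    ∃ c > 0, ∀ x ∈ S.lamStar, (∀ p ∈ S.parabolicSet, ε ≤ dist x p) →
      c ≤ Real.log (S.T' x) := by
  set D := {x ∈ S.lamStar | ∀ p ∈ S.parabolicSet, ε ≤ dist x p} with hD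
  have hDeq : D = S.lamStar ∩ ⋂ p ∈ S.parabolicSet, {x | ε ≤ dist x p} := by
    ext x; simp [hD]
  have hDclosed : IsClosed D := by
    rw [hDeq]
    exact S.isClosed_lamStar.inter (isClosed_biInter fun p _ =>
      isClosed_le continuous_const (continuous_id.dist continuous_const))
  have hDsub : D ⊆ S.lamStar := fun x hx => hx.1
  have hDcomp : IsCompact D := S.isCompact_lamStar.of_isClosed_subset hDclosed hDsub
  rcases D.eq_empty_or_nonempty with h | h
  · exact ⟨1, one_pos, fun x hx hdist => absurd (show x ∈ D from ⟨hx, hdist⟩)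
      (by simp [h])⟩
  obtain ⟨x₀, hx₀D, hmin⟩ := hDcomp.exists_isMinOn h
    (S.contT'_K.mono (hDsub.trans S.lamStar_subset_K))
  have hx₀K : x₀ ∈ S.K := S.lamStar_subset_K hx₀D.1
  have h1' : 1 < S.T' x₀ := by
    rcases lt_or_eq_of_le (S.one_le_T' hx₀K) with h' | h'
    · exact h'
    · exfalso
      have hp : x₀ ∈ S.parabolicSet := S.mem_parabolic_of_T'_eq_one hx₀K h'.symm
      have := hx₀D.2 x₀ hp
      simp only [dist_self] at this
      linarith
  refine ⟨Real.log (S.T' x₀), Real.log_pos h1', fun x hx hdist => ?_⟩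
  exact Real.log_le_log (by linarith) (hmin (show x ∈ D from ⟨hx, hdist⟩))

lemma g_nonneg (η : SymbSp m) : 0 ≤ S.g η :=
  Real.log_nonneg (S.one_le_T' (S.lamStar_subset_K (S.code_mem_lamStar η)))

lemma birkhoff_g_nonneg (n : ℕ) (ω : SymbSp m) : 0 ≤ birkhoff shift S.g n ω := by
  unfold birkhoff
  rw [smul_eq_mul]
  exact mul_nonneg (by positivity) (Finset.sum_nonneg fun j _ => S.g_nonneg _)

lemma birkhoff_g_bounded (ω : SymbSp m) :
    ∃ Mg : ℝ, ∀ N : ℕ, birkhoff shift S.g N ω ≤ Mg := by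
  obtain ⟨z, hzΛ, hzmax⟩ := S.isCompact_lamStar.exists_isMaxOn
    ⟨S.fixPt ⟨0, S.hm⟩, S.fixPt_mem_lamStar _⟩ (S.contT'_K.mono S.lamStar_subset_K)
  set Mg := max (Real.log (S.T' z)) 0 with hMg
  refine ⟨Mg, fun N => ?_⟩
  have hterm : ∀ k : ℕ, S.g (shift^[k] ω) ≤ Mg := by
    intro k
    have hmem : S.code (shift^[k] ω) ∈ S.lamStar := S.code_mem_lamStar _
    have h1 : S.T' (S.code (shift^[k] ω)) ≤ S.T' z := hzmax hmem
    have h0 : (0 : ℝ) < S.T' (S.code (shift^[k] ω)) :=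
      lt_of_lt_of_le one_pos (S.one_le_T' (S.lamStar_subset_K hmem))
    exact le_trans (Real.log_le_log h0 h1) (le_max_left _ _)
  rcases Nat.eq_zero_or_pos N with rfl | hN
  · simp [birkhoff, hMg]
  have hN' : (0 : ℝ) < N := by exact_mod_cast hN
  unfold birkhoff
  rw [smul_eq_mul]
  have hsum : ∑ k ∈ Finset.range N, S.g (shift^[k] ω) ≤ N * Mg := by
    calc ∑ k ∈ Finset.range N, S.g (shift^[k] ω)
        ≤ ∑ _k ∈ Finset.range N, Mg := Finset.sum_le_sum fun k _ => hterm k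
      _ = N * Mg := by rw [Finset.sum_const, Finset.card_range, nsmul_eq_mul]
  calc (N : ℝ)⁻¹ * ∑ k ∈ Finset.range N, S.g (shift^[k] ω)
      ≤ (N : ℝ)⁻¹ * (N * Mg) := by
        exact mul_le_mul_of_nonneg_left hsum (by positivity)
    _ = Mg := by field_simp

end PCSystem

end AuxStatement10

/-- **Lemma 7 (Statement 10).** If `A_{n_j} g(ω) → 0` along a subsequence and
`A_{n_j} f(ω)` converges (where `f = F ∘ Π`), the limit lies in
`A = Co{F(x) : x parabolic}`; in particular this holds when
`liminf_n A_n g(ω) = 0` and `lim_n A_n f(ω)` exists. -/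
theorem statement10 {m d : ℕ} (S : PCSystem m)
    (F : ℝ → EuclideanSpace ℝ (Fin d)) (hF : ContinuousOn F S.attractor)
    (ω : SymbSp m) :
    (∀ n : ℕ → ℕ, StrictMono n → ∀ β : EuclideanSpace ℝ (Fin d),
        Tendsto (fun j => birkhoff shift S.g (n j) ω) atTop (𝓝 0) →
        Tendsto (fun j => birkhoff shift (F ∘ S.code) (n j) ω) atTop (𝓝 β) →
        β ∈ convexHull ℝ (F '' S.parabolicSet)) ∧
    (atTop.liminf (fun n => birkhoff shift S.g n ω) = 0 →
      ∀ β : EuclideanSpace ℝ (Fin d),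
        Tendsto (fun n => birkhoff shift (F ∘ S.code) n ω) atTop (𝓝 β) →
        β ∈ convexHull ℝ (F '' S.parabolicSet)) := by
  classical
  have main : ∀ n : ℕ → ℕ, StrictMono n → ∀ β : EuclideanSpace ℝ (Fin d),
      Tendsto (fun j => birkhoff shift S.g (n j) ω) atTop (𝓝 0) →
      Tendsto (fun j => birkhoff shift (F ∘ S.code) (n j) ω) atTop (𝓝 β) →
      β ∈ convexHull ℝ (F '' S.parabolicSet) := by
    intro n hn β hg hf
    by_contra hβ
    set P := S.parabolicSet with hPdef
    have hPfin : P.Finite := (finite_range S.fixPt).subset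
      (by rintro y ⟨i, hy, -⟩; exact ⟨i, hy.symm⟩)
    have hPsub : P ⊆ S.lamStar := fun p hp => S.parabolic_mem_lamStar hp
    have hFcont : ContinuousOn F S.lamStar := hF.mono S.lamStar_subset_attractor
    obtain ⟨ℓ, u, hCu, huβ⟩ :=
      geometric_hahn_banach_closed_point (convex_convexHull ℝ (F '' P))
        ((hPfin.image F).isCompact_convexHull (𝕜 := ℝ)).isClosed hβ
    have hcontl : ContinuousOn (fun x => ℓ (F x)) S.lamStar :=
      ℓ.continuous.comp_continuousOn hFcont
    -- a uniform ε of continuity around the parabolic points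
    have hεex : ∃ ε > 0, ∀ x ∈ S.lamStar, ∀ p ∈ P, dist x p < ε → ℓ (F x) < u := by
      have hp : ∀ p ∈ hPfin.toFinset, ∃ ε > 0, ∀ x ∈ S.lamStar,
          dist x p < ε → ℓ (F x) < u := by
        intro p hp
        rw [Set.Finite.mem_toFinset] at hp
        have hpΛ : p ∈ S.lamStar := hPsub hp
        have h1 : ℓ (F p) < u := hCu _ (subset_convexHull ℝ _ (mem_image_of_mem F hp))
        have h2 : ContinuousWithinAt (fun x => ℓ (F x)) S.lamStar p := hcontl p hpΛ
        have h3 : {x | ℓ (F x) < u} ∈ 𝓝[S.lamStar] p := h2 (Iio_mem_nhds h1)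
        rw [Metric.mem_nhdsWithin_iff] at h3
        obtain ⟨ε, hε, hsub⟩ := h3
        exact ⟨ε, hε, fun x hx hdx => hsub ⟨Metric.mem_ball.2 hdx, hx⟩⟩
      choose! e he1 he2 using hp
      rcases hPfin.toFinset.eq_empty_or_nonempty with hPe | hPne
      · refine ⟨1, one_pos, fun x hx p hpP _ => ?_⟩
        exact absurd (hPfin.mem_toFinset.2 hpP) (by simp [hPe])
      · refine ⟨hPfin.toFinset.inf' hPne e, ?_, ?_⟩
        · rw [gt_iff_lt, Finset.lt_inf'_iff]
          exact fun p hp => he1 p hp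
        · intro x hx p hpP hdx
          have hpF := hPfin.mem_toFinset.2 hpP
          exact he2 p hpF x hx (lt_of_lt_of_le hdx (Finset.inf'_le e hpF))
    obtain ⟨ε, hε, hεgood⟩ := hεex
    obtain ⟨c, hc, hcgap⟩ := S.exists_gap hε
    -- a global bound on `ℓ ∘ F` over the compact core
    obtain ⟨z, hzΛ, hzmax⟩ := S.isCompact_lamStar.exists_isMaxOn
      ⟨S.fixPt ⟨0, S.hm⟩, S.fixPt_mem_lamStar _⟩ hcontl
    set M := max (ℓ (F z)) u with hM
    have hMbound : ∀ x ∈ S.lamStar, ℓ (F x) ≤ M := fun x hx =>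
      (hzmax hx).trans (le_max_left _ _)
    have huM : u ≤ M := le_max_right _ _
    set x : ℕ → ℝ := fun k => S.code (shift^[k] ω) with hxdef
    have hxΛ : ∀ k, x k ∈ S.lamStar := fun k => S.code_mem_lamStar _
    set bad : ℕ → Finset ℕ := fun N => (Finset.range N).filter
      (fun k => ∀ p ∈ P, ε ≤ dist (x k) p) with hbad
    -- the bad proportion is controlled by the Birkhoff average of `g`
    have hkey1 : ∀ N : ℕ, c * (((bad N).card : ℝ) / N) ≤ birkhoff shift S.g N ω := by
      intro N
      rcases Nat.eq_zero_or_pos N with rfl | hN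
      · simp [birkhoff, hbad]
      have hN' : (0 : ℝ) < N := by exact_mod_cast hN
      have hsum : ((bad N).card : ℝ) * c ≤ ∑ k ∈ Finset.range N, S.g (shift^[k] ω) := by
        calc ((bad N).card : ℝ) * c
            = (bad N).card • c := by rw [nsmul_eq_mul]
          _ ≤ ∑ k ∈ bad N, S.g (shift^[k] ω) := by
              apply Finset.card_nsmul_le_sum
              intro k hk
              rw [hbad, Finset.mem_filter] at hk
              exact hcgap (x k) (hxΛ k) hk.2
          _ ≤ ∑ k ∈ Finset.range N, S.g (shift^[k] ω) :=
              Finset.sum_le_sum_of_subset_of_nonneg (Finset.filter_subset _ _)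
                (fun k _ _ => S.g_nonneg _)
      show c * (((bad N).card : ℝ) / N) ≤ (N : ℝ)⁻¹ • ∑ k ∈ Finset.range N, S.g (shift^[k] ω)
      rw [smul_eq_mul]
      calc c * (((bad N).card : ℝ) / N) = (((bad N).card : ℝ) * c) / N := by ring
        _ ≤ (∑ k ∈ Finset.range N, S.g (shift^[k] ω)) / N := by gcongr
        _ = (N : ℝ)⁻¹ * ∑ k ∈ Finset.range N, S.g (shift^[k] ω) := by
            rw [div_eq_inv_mul]
    have hb0 : Tendsto (fun j => ((bad (n j)).card : ℝ) / (n j)) atTop (𝓝 0) := by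
      have hle : ∀ j, ((bad (n j)).card : ℝ) / (n j) ≤ c⁻¹ * birkhoff shift S.g (n j) ω := by
        intro j
        have h := hkey1 (n j)
        calc ((bad (n j)).card : ℝ) / (n j)
            = c⁻¹ * (c * (((bad (n j)).card : ℝ) / (n j))) := by
              field_simp
          _ ≤ c⁻¹ * birkhoff shift S.g (n j) ω := by
              exact mul_le_mul_of_nonneg_left h (by positivity)
      have hge : ∀ j, (0:ℝ) ≤ ((bad (n j)).card : ℝ) / (n j) := fun j => by positivity
      have hlim : Tendsto (fun j => c⁻¹ * birkhoff shift S.g (n j) ω) atTop (𝓝 0) := by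
        have h := hg.const_mul c⁻¹
        simpa using h
      exact tendsto_of_tendsto_of_tendsto_of_le_of_le tendsto_const_nhds hlim hge hle
    -- the linear functional of the Birkhoff average of f is small
    have hkey2 : ∀ j : ℕ, 1 ≤ n j → ℓ (birkhoff shift (F ∘ S.code) (n j) ω) ≤
        u + (((bad (n j)).card : ℝ) / (n j)) * (M - u) := by
      intro j hj
      set N := n j with hNdef
      have hN' : (0 : ℝ) < N := by exact_mod_cast hj
      have hℓ : ℓ (birkhoff shift (F ∘ S.code) N ω) =
          (N : ℝ)⁻¹ * ∑ k ∈ Finset.range N, ℓ (F (x k)) := by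
        show ℓ ((N : ℝ)⁻¹ • ∑ k ∈ Finset.range N, (F ∘ S.code) (shift^[k] ω)) = _
        rw [_root_.map_smul, _root_.map_sum, smul_eq_mul]
        rfl
      have hcard : ((bad N).card : ℝ) +
          (((Finset.range N).filter (fun k => ¬ ∀ p ∈ P, ε ≤ dist (x k) p)).card : ℝ)
          = (N : ℝ) := by
        have h := Finset.card_filter_add_card_filter_not
          (s := Finset.range N) (p := fun k => ∀ p ∈ P, ε ≤ dist (x k) p)
        rw [Finset.card_range] at h
        exact_mod_cast h
      have hsum : ∑ k ∈ Finset.range N, ℓ (F (x k)) ≤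
          (N : ℝ) * u + ((bad N).card : ℝ) * (M - u) := by
        have hsplit := Finset.sum_filter_add_sum_filter_not (Finset.range N)
          (fun k => ∀ p ∈ P, ε ≤ dist (x k) p) (fun k => ℓ (F (x k)))
        have h1 : ∑ k ∈ bad N, ℓ (F (x k)) ≤ ((bad N).card : ℝ) * M := by
          rw [← nsmul_eq_mul]
          exact Finset.sum_le_card_nsmul _ _ _ fun k _ => hMbound _ (hxΛ k)
        have h2 : ∑ k ∈ (Finset.range N).filter (fun k => ¬ ∀ p ∈ P, ε ≤ dist (x k) p),
            ℓ (F (x k)) ≤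
            (((Finset.range N).filter (fun k => ¬ ∀ p ∈ P, ε ≤ dist (x k) p)).card : ℝ)
              * u := by
          rw [← nsmul_eq_mul]
          apply Finset.sum_le_card_nsmul
          intro k hk
          rw [Finset.mem_filter] at hk
          push_neg at hk
          obtain ⟨-, p, hpP, hdp⟩ := hk
          exact (hεgood (x k) (hxΛ k) p hpP hdp).le
        have heq : ∑ k ∈ Finset.range N, ℓ (F (x k)) =
            (∑ k ∈ bad N, ℓ (F (x k))) +
            ∑ k ∈ (Finset.range N).filter (fun k => ¬ ∀ p ∈ P, ε ≤ dist (x k) p),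
              ℓ (F (x k)) := hsplit.symm
        rw [heq]
        refine (add_le_add h1 h2).trans (le_of_eq ?_)
        rw [show (((Finset.range N).filter (fun k => ¬ ∀ p ∈ P, ε ≤ dist (x k) p)).card : ℝ)
            = (N : ℝ) - ((bad N).card : ℝ) by linarith]
        ring
      rw [hℓ]
      calc (N : ℝ)⁻¹ * ∑ k ∈ Finset.range N, ℓ (F (x k))
          ≤ (N : ℝ)⁻¹ * ((N : ℝ) * u + ((bad N).card : ℝ) * (M - u)) := by
            exact mul_le_mul_of_nonneg_left hsum (by positivity)
        _ = u + (((bad N).card : ℝ) / (N : ℝ)) * (M - u) := by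
            field_simp
    have hfl : Tendsto (fun j => ℓ (birkhoff shift (F ∘ S.code) (n j) ω)) atTop
        (𝓝 (ℓ β)) := (ℓ.continuous.tendsto β).comp hf
    have hrl : Tendsto (fun j => u + (((bad (n j)).card : ℝ) / (n j)) * (M - u)) atTop
        (𝓝 (u + 0 * (M - u))) := tendsto_const_nhds.add (hb0.mul tendsto_const_nhds)
    have hfinal : ℓ β ≤ u + 0 * (M - u) := by
      apply le_of_tendsto_of_tendsto hfl hrl
      filter_upwards [eventually_ge_atTop 1] with j hj
      exact hkey2 j (le_trans hj hn.le_apply)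
    rw [zero_mul, add_zero] at hfinal
    linarith
  refine ⟨main, ?_⟩
  intro hlim β hf
  obtain ⟨Mg, hMg⟩ := S.birkhoff_g_bounded ω
  have hfreq : ∀ j : ℕ, ∃ᶠ N in atTop, birkhoff shift S.g N ω < 1 / (j + 1) := by
    intro j
    apply frequently_lt_of_liminf_lt (isCoboundedUnder_ge_of_le atTop hMg)
    rw [hlim]
    positivity
  obtain ⟨φ, hφmono, hφ⟩ := Filter.extraction_forall_of_frequently hfreq
  have hg0 : Tendsto (fun j => birkhoff shift S.g (φ j) ω) atTop (𝓝 0) :=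
    tendsto_of_tendsto_of_tendsto_of_le_of_le tendsto_const_nhds
      tendsto_one_div_add_atTop_nhds_zero_nat
      (fun j => S.birkhoff_g_nonneg _ ω) (fun j => (hφ j).le)
  exact main φ hφmono β hg0 (hf.comp hφmono.tendsto_atTop)
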